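/- With x(t) = c₁(1 − i t)/t² + c₂ e^{−i t}/t² and c₁ ≠ 0, the quantity t‖x(t)‖ does not tend to 0 as t → ∞; in fact, t‖x(t)‖ ≥ |c₁|/2 for all sufficiently large t. Consequently ‖Q(x(t))‖ = ‖x(t)‖ is not o(t^{-1}). -/

import Mathlib

/-- For `x(t) = c₁(1 − it)/t² + c₂ e^{−it}/t²` with `c₁ ≠ 0`, one has
`t‖x(t)‖ ≥ |c₁|/2` for all large `t`; in particular `‖Q(x(t))‖ = ‖x(t)‖` is not `o(t⁻¹)`. -/
theorem stmt11 (c₁ c₂ : ℝ) (hc₁ : c₁ ≠ 0) (x : ℝ → ℂ)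
    (hx : ∀ t : ℝ, x t = (c₁ * (1 - Complex.I * t)) / t ^ 2
      + (c₂ * Complex.exp (-(Complex.I * t))) / t ^ 2) :
    (∃ T : ℝ, ∀ t ≥ T, |c₁| / 2 ≤ t * ‖x t‖) ∧
      ¬ Filter.Tendsto (fun t : ℝ => t * ‖x t‖) Filter.atTop (nhds 0) := by
  have hc : (0:ℝ) < |c₁| := abs_pos.mpr hc₁
  set T : ℝ := max 1 (2 * (|c₁| + |c₂|) / |c₁|) with hT
  have key : ∀ t ≥ T, |c₁| / 2 ≤ t * ‖x t‖ := by
    intro t ht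
    have ht1 : (1:ℝ) ≤ t := le_trans (le_max_left _ _) ht
    have ht0 : (0:ℝ) < t := by linarith
    have ht2 : 2 * (|c₁| + |c₂|) / |c₁| ≤ t := le_trans (le_max_right _ _) ht
    have ht2' : 2 * (|c₁| + |c₂|) ≤ |c₁| * t := by
      rw [div_le_iff₀ hc] at ht2; linarith
    -- norm of the exponential term
    have hB : ‖(↑c₂ * Complex.exp (-(Complex.I * t)) : ℂ)‖ = |c₂| := by
      rw [norm_mul, Complex.norm_real, Real.norm_eq_abs,
        Complex.norm_exp]
      simp
    -- norm of the main term from below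
    have hA : |c₁| * (t - 1) ≤ ‖(↑c₁ * (1 - Complex.I * t) : ℂ)‖ := by
      rw [norm_mul, Complex.norm_real, Real.norm_eq_abs]
      have h1 : ‖(Complex.I * t : ℂ)‖ - ‖(1 : ℂ)‖ ≤ ‖(1 - Complex.I * t : ℂ)‖ := by
        have := norm_sub_norm_le (Complex.I * (t:ℂ)) 1
        rwa [norm_sub_rev] at this
      have h2 : ‖(Complex.I * t : ℂ)‖ = t := by
        rw [norm_mul, Complex.norm_I, Complex.norm_real, one_mul,
          Real.norm_eq_abs, abs_of_pos ht0]
      rw [h2, norm_one] at h1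
      exact mul_le_mul_of_nonneg_left (by linarith) (abs_nonneg _)
    have hnt2 : ‖((t:ℂ) ^ 2)‖ = t ^ 2 := by
      rw [norm_pow, Complex.norm_real, Real.norm_eq_abs, sq_abs]
    have hxl : (|c₁| * (t - 1) - |c₂|) / t ^ 2 ≤ ‖x t‖ := by
      rw [hx t]
      have htri := norm_sub_le
        (↑c₁ * (1 - Complex.I * t) / (t:ℂ) ^ 2
          + ↑c₂ * Complex.exp (-(Complex.I * t)) / (t:ℂ) ^ 2)
        (↑c₂ * Complex.exp (-(Complex.I * t)) / (t:ℂ) ^ 2)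
      rw [add_sub_cancel_right] at htri
      rw [norm_div, norm_div, hnt2, hB] at htri
      have : (|c₁| * (t - 1) - |c₂|) / t ^ 2
          ≤ ‖(↑c₁ * (1 - Complex.I * t) : ℂ)‖ / t ^ 2 - |c₂| / t ^ 2 := by
        rw [div_sub_div_same, div_le_div_iff₀ (by positivity) (by positivity)]
        nlinarith [hA]
      linarith
    have e : t * ((|c₁| * (t - 1) - |c₂|) / t ^ 2) = (|c₁| * (t - 1) - |c₂|) / t := by
      field_simp
    have h3 : |c₁| / 2 ≤ (|c₁| * (t - 1) - |c₂|) / t := by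
      rw [div_le_div_iff₀ (by norm_num) ht0]
      nlinarith
    calc |c₁| / 2 ≤ t * ((|c₁| * (t - 1) - |c₂|) / t ^ 2) := by rw [e]; exact h3
      _ ≤ t * ‖x t‖ := mul_le_mul_of_nonneg_left hxl ht0.le
  refine ⟨⟨T, key⟩, fun h => ?_⟩
  have hlt : ∀ᶠ t in Filter.atTop, t * ‖x t‖ < |c₁| / 2 :=
    h.eventually_lt_const (half_pos hc)
  obtain ⟨t, htT, hlt'⟩ := ((Filter.eventually_ge_atTop T).and hlt).exists
  exact absurd (key t htT) (not_le.mpr hlt')
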